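/- For n = 2, the matrix M_2(x) = [[0,1],[x,1]] has largest eigenvalue d_2(x) = (1+√(1+4x))/2, and ∫₀¹ log d_2(x) d(log x) = ∫₀¹ log((1+√(1+4x))/2)/x dx = π²/15. -/

import Mathlib

open Real Filter MeasureTheory Set intervalIntegral

noncomputable def fdi (t : ℝ) : ℝ := -Real.log (1-t)/t
noncomputable def Fdi (x : ℝ) : ℝ := ∫ t in (0:ℝ)..x, fdi t

lemma hasDerivAt_neg_log_one_sub : HasDerivAt (fun t : ℝ => -Real.log (1-t)) 1 0 := by
  have h2 : HasDerivAt (fun t : ℝ => (1:ℝ) - t) (-1) 0 := by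
    exact (hasDerivAt_id' (0:ℝ)).const_sub (1:ℝ)
  have h3 := (Real.hasDerivAt_log (by norm_num : (1:ℝ) - 0 ≠ 0)).comp 0 h2
  exact h3.neg.congr_deriv (by norm_num)

lemma fdi_slope : Tendsto fdi (nhdsWithin 0 {(0:ℝ)}ᶜ) (nhds 1) := by
  have := hasDerivAt_iff_tendsto_slope.1 hasDerivAt_neg_log_one_sub
  refine this.congr' ?_
  filter_upwards [self_mem_nhdsWithin] with t ht
  have ht' : t ≠ 0 := ht
  simp only [slope_def_field, fdi]
  rw [sub_zero, sub_zero]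
  simp

-- continuity of fdi away from 0
lemma fdi_contAt {x : ℝ} (hx : x ≠ 0) (hx1 : x < 1) : ContinuousAt fdi x := by
  have h1 : ContinuousAt (fun t : ℝ => -Real.log (1-t)) x := by
    have : ContinuousAt Real.log (1-x) := Real.continuousAt_log (by linarith)
    exact (this.comp (by fun_prop)).neg
  exact h1.div continuousAt_id hx

noncomputable def fdiE (t : ℝ) : ℝ := if t = 0 then 1 else fdi t

lemma fdiE_eq_ae : fdi =ᵐ[volume] fdiE := by
  have h : {t : ℝ | ¬ fdi t = fdiE t} ⊆ {0} := by
    intro t ht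
    simp only [mem_setOf_eq, fdiE] at ht
    rcases eq_or_ne t 0 with rfl | h0
    · exact mem_singleton _
    · simp [h0] at ht
  exact ae_iff.2 (measure_mono_null h (measure_singleton 0))

lemma fdiE_contOn : ContinuousOn fdiE (Icc (-(3/4) : ℝ) (99/100)) := by
  intro x hx
  rcases eq_or_ne x 0 with rfl | hx0
  · apply ContinuousAt.continuousWithinAt
    rw [ContinuousAt]
    have : fdiE 0 = 1 := by simp [fdiE]
    rw [this, ← nhdsNE_sup_pure (0:ℝ)]
    rw [tendsto_sup]
    constructor
    · refine fdi_slope.congr' ?_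
      filter_upwards [self_mem_nhdsWithin] with t ht
      have ht' : t ≠ 0 := ht
      simp [fdiE, ht']
    · have : fdiE 0 = 1 := by simp [fdiE]
      simpa [this] using (tendsto_pure_nhds fdiE 0)
  · apply ContinuousAt.continuousWithinAt
    have hx1 : x < 1 := lt_of_le_of_lt hx.2 (by norm_num)
    refine (fdi_contAt hx0 hx1).congr ?_
    filter_upwards [isOpen_ne.mem_nhds hx0] with t ht
    simp [fdiE, ht]

lemma fdi_meas : Measurable fdi := by
  unfold fdi
  exact ((Real.measurable_log.comp (measurable_const.sub measurable_id)).neg).div measurable_id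

lemma fdi_hasSum {t : ℝ} (ht : t ∈ Ioo (0:ℝ) 1) :
    HasSum (fun n : ℕ => t ^ n / (n+1)) (fdi t) := by
  have habs : |t| < 1 := by rw [abs_of_pos ht.1]; exact ht.2
  have h := (hasSum_pow_div_log_of_abs_lt_one habs).div_const t
  have ht0 : t ≠ 0 := ne_of_gt ht.1
  have heq : (fun n : ℕ => t ^ n / (n+1)) = fun n : ℕ => t ^ (n+1) / (n+1) / t := by
    funext n
    field_simp
    ring
  rw [heq]
  exact h

lemma fdi_nonneg {t : ℝ} (ht : t ∈ Ioo (0:ℝ) 1) : 0 ≤ fdi t := by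
  have h1 : Real.log (1-t) ≤ 0 := Real.log_nonpos (by linarith [ht.2, ht.1]) (by linarith [ht.1])
  have h2 : 0 < t := ht.1
  unfold fdi
  have h3 : 0 ≤ -Real.log (1-t) := by linarith
  positivity

lemma sum_shift : HasSum (fun n : ℕ => 1 / ((n:ℝ)+1)^2) (π^2/6) := by
  have h := hasSum_zeta_two
  have h0 : (fun n : ℕ => (1:ℝ) / (n:ℝ)^2) 0 = 0 := by norm_num
  have := (hasSum_nat_add_iff' 1).2 h
  simp only [Finset.range_one, Finset.sum_singleton, h0, sub_zero] at this
  convert this using 2 with n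
  · rfl
  push_cast
  ring

lemma fdi_lintegral : ∫⁻ t in Ioo (0:ℝ) 1, ENNReal.ofReal (fdi t) = ENNReal.ofReal (π^2/6) := by
  have hmeasset : MeasurableSet (Ioo (0:ℝ) 1) := measurableSet_Ioo
  have step1 : ∫⁻ t in Ioo (0:ℝ) 1, ENNReal.ofReal (fdi t)
      = ∫⁻ t in Ioo (0:ℝ) 1, ∑' n : ℕ, ENNReal.ofReal (t^n/(n+1)) := by
    refine setLIntegral_congr_fun hmeasset ?_
    intro t ht
    beta_reduce
    rw [← ENNReal.ofReal_tsum_of_nonneg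
      (fun n => div_nonneg (pow_nonneg ht.1.le n) (by positivity))
      (fdi_hasSum ht).summable, (fdi_hasSum ht).tsum_eq]
  have step2 : ∫⁻ t in Ioo (0:ℝ) 1, ∑' n : ℕ, ENNReal.ofReal (t^n/(n+1))
      = ∑' n : ℕ, ∫⁻ t in Ioo (0:ℝ) 1, ENNReal.ofReal (t^n/(n+1)) := by
    exact lintegral_tsum fun n => ((measurable_id.pow_const n).div_const _).ennreal_ofReal.aemeasurable
  have step3 : ∀ n : ℕ, ∫⁻ t in Ioo (0:ℝ) 1, ENNReal.ofReal (t^n/(n+1))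
      = ENNReal.ofReal (1/((n:ℝ)+1)^2) := by
    intro n
    have hint : IntegrableOn (fun t : ℝ => t^n/(n+1)) (Ioo 0 1) volume := by
      have hc : Continuous (fun t : ℝ => t^n/(n+1)) := by fun_prop
      exact (hc.integrableOn_Icc).mono_set Ioo_subset_Icc_self
    rw [← MeasureTheory.ofReal_integral_eq_lintegral_ofReal hint]
    · congr 1
      have : ∫ t in Ioo (0:ℝ) 1, t^n/(n+1) = ∫ t in (0:ℝ)..1, t^n/(n+1) := by
        rw [intervalIntegral.integral_of_le zero_le_one, MeasureTheory.integral_Ioc_eq_integral_Ioo]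
      rw [this, intervalIntegral.integral_div, integral_pow]
      norm_num
      have hn : ((n:ℝ)+1) ≠ 0 := by positivity
      field_simp
    · filter_upwards [ae_restrict_mem hmeasset] with t ht
      have := ht.1
      positivity
  rw [step1, step2]
  simp_rw [step3]
  rw [← ENNReal.ofReal_tsum_of_nonneg (fun n => by positivity) sum_shift.summable, sum_shift.tsum_eq]

lemma fdi_integrableOn_Ioo : IntegrableOn fdi (Ioo (0:ℝ) 1) volume := by
  constructor
  · exact (fdi_meas.stronglyMeasurable.aestronglyMeasurable).restrict
  · rw [hasFiniteIntegral_iff_norm]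
    have : ∫⁻ t in Ioo (0:ℝ) 1, ENNReal.ofReal ‖fdi t‖ = ∫⁻ t in Ioo (0:ℝ) 1, ENNReal.ofReal (fdi t) := by
      refine setLIntegral_congr_fun measurableSet_Ioo ?_
      intro t ht
      beta_reduce
      rw [Real.norm_eq_abs, abs_of_nonneg (fdi_nonneg ht)]
    rw [this, fdi_lintegral]
    exact ENNReal.ofReal_lt_top

lemma fdi_integral_Ioo : ∫ t in Ioo (0:ℝ) 1, fdi t = π^2/6 := by
  rw [MeasureTheory.integral_eq_lintegral_of_nonneg_ae]
  · rw [fdi_lintegral, ENNReal.toReal_ofReal (by positivity)]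
  · filter_upwards [ae_restrict_mem measurableSet_Ioo] with t ht using fdi_nonneg ht
  · exact (fdi_meas.stronglyMeasurable.aestronglyMeasurable).restrict

lemma fdi_intervalIntegrable {a b : ℝ} (ha : a ∈ Icc (-(3/4) : ℝ) 1) (hb : b ∈ Icc (-(3/4) : ℝ) 1) :
    IntervalIntegrable fdi volume a b := by
  have part_neg : IntervalIntegrable fdi volume (-(3/4)) 0 := by
    rw [intervalIntegrable_iff_integrableOn_Icc_of_le (by norm_num)]
    have hE : IntegrableOn fdiE (Icc (-(3/4):ℝ) 0) volume := by
      refine ContinuousOn.integrableOn_compact isCompact_Icc ?_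
      exact fdiE_contOn.mono (Icc_subset_Icc le_rfl (by norm_num))
    exact hE.congr_fun_ae (ae_restrict_of_ae fdiE_eq_ae.symm)
  have part_pos : IntervalIntegrable fdi volume 0 1 := by
    rw [intervalIntegrable_iff_integrableOn_Ioc_of_le zero_le_one]
    exact fdi_integrableOn_Ioo.congr_set_ae Ioo_ae_eq_Ioc.symm
  have master : IntervalIntegrable fdi volume (-(3/4)) 1 := part_neg.trans part_pos
  refine master.mono_set ?_
  rw [uIcc_of_le (by norm_num : (-(3/4):ℝ) ≤ 1)]
  exact uIcc_subset_Icc ha hb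

lemma Fdi_contOn : ContinuousOn Fdi (Icc (-(3/4) : ℝ) 1) := by
  have h := intervalIntegral.continuousOn_primitive_interval'
    (μ := volume) (f := fdi) (b₁ := (-(3/4):ℝ)) (b₂ := 1) (a := 0)
    (fdi_intervalIntegrable (by norm_num) (by norm_num)) (by rw [uIcc_of_le (by norm_num)]; norm_num)
  rwa [uIcc_of_le (by norm_num : (-(3/4):ℝ) ≤ 1)] at h

lemma Fdi_hasDerivAt {x : ℝ} (h1 : -(3/4) < x) (h2 : x < 1) (h0 : x ≠ 0) :
    HasDerivAt Fdi (fdi x) x := by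
  refine intervalIntegral.integral_hasDerivAt_right
    (fdi_intervalIntegrable (by norm_num) (by constructor <;> linarith)) ?_ (fdi_contAt h0 h2)
  exact fdi_meas.stronglyMeasurable.stronglyMeasurableAtFilter

lemma Fdi_zero : Fdi 0 = 0 := intervalIntegral.integral_same

lemma Fdi_one : Fdi 1 = π^2/6 := by
  unfold Fdi
  rw [intervalIntegral.integral_of_le zero_le_one, MeasureTheory.integral_Ioc_eq_integral_Ioo,
    fdi_integral_Ioo]

lemma const_of_deriv_zero {h : ℝ → ℝ} {a b : ℝ} (hab : a < b)
    (hcont : ContinuousOn h (Icc a b))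
    (hderiv : ∀ x ∈ Ioo a b, HasDerivAt h 0 x) : h b = h a := by
  have key : ∀ x ∈ Ioc a b, h b = h x := by
    intro x hx
    have h1 : ∀ y ∈ Icc x b, h y = h x := by
      refine constant_of_has_deriv_right_zero (hcont.mono (Icc_subset_Icc hx.1.le le_rfl)) ?_
      intro y hy
      exact ((hderiv y ⟨lt_of_lt_of_le hx.1 hy.1, hy.2⟩).hasDerivWithinAt)
    exact h1 b ⟨hx.2, le_rfl⟩
  have hcw : ContinuousWithinAt h (Ioo a b) a :=
    (hcont a ⟨le_rfl, hab.le⟩).mono Ioo_subset_Icc_self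
  have h2 : Tendsto h (nhdsWithin a (Ioo a b)) (nhds (h a)) := hcw
  have h3 : Tendsto h (nhdsWithin a (Ioo a b)) (nhds (h b)) := by
    refine Tendsto.congr' ?_ tendsto_const_nhds
    filter_upwards [self_mem_nhdsWithin] with y hy
    exact key y (Ioo_subset_Ioc_self hy)
  have : (nhdsWithin a (Ioo a b)).NeBot := by
    rw [nhdsWithin_Ioo_eq_nhdsGT hab]
    infer_instance
  exact (tendsto_nhds_unique h3 h2)

lemma eq_dup {b : ℝ} (hb0 : 0 < b) (hb : b ≤ 7/10) :
    Fdi b + Fdi (-b) - Fdi (b^2)/2 = 0 := by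
  set h : ℝ → ℝ := fun x => Fdi x + Fdi (-x) - Fdi (x^2)/2 with hh
  have hcont : ContinuousOn h (Icc 0 b) := by
    have m1 : MapsTo (fun x : ℝ => x) (Icc 0 b) (Icc (-(3/4):ℝ) 1) := by
      intro x hx
      obtain ⟨h1, h2⟩ := hx
      simp only [mem_Icc]
      constructor <;> linarith
    have m2 : MapsTo (fun x : ℝ => -x) (Icc 0 b) (Icc (-(3/4):ℝ) 1) := by
      intro x hx
      obtain ⟨h1, h2⟩ := hx
      simp only [mem_Icc]
      constructor <;> linarith
    have m3 : MapsTo (fun x : ℝ => x^2) (Icc 0 b) (Icc (-(3/4):ℝ) 1) := by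
      intro x hx
      obtain ⟨h1, h2⟩ := hx
      simp only [mem_Icc]
      constructor <;> nlinarith
    exact ((Fdi_contOn.comp continuousOn_id m1).add
      (Fdi_contOn.comp continuousOn_neg m2)).sub
      ((Fdi_contOn.comp (continuousOn_pow 2) m3).div_const 2)
  have hderiv : ∀ x ∈ Ioo 0 b, HasDerivAt h 0 x := by
    intro x hx
    obtain ⟨hx0, hxb⟩ := hx
    have hx1 : x < 1 := by linarith
    have dF : HasDerivAt Fdi (fdi x) x := Fdi_hasDerivAt (by linarith) hx1 (ne_of_gt hx0)
    have dFn : HasDerivAt (fun y : ℝ => Fdi (-y)) (fdi (-x) * (-1)) x := by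
      have hin : HasDerivAt (fun y : ℝ => -y) (-1) x := (hasDerivAt_id x).neg
      exact (Fdi_hasDerivAt (by linarith) (by linarith) (by simp [ne_of_gt hx0])).comp x hin
    have dFsq : HasDerivAt (fun y : ℝ => Fdi (y^2)) (fdi (x^2) * (2*x)) x := by
      have hin : HasDerivAt (fun y : ℝ => y^2) (2*x) x := by
        simpa using hasDerivAt_pow 2 x
      refine HasDerivAt.comp x (Fdi_hasDerivAt ?_ ?_ ?_) hin
      · nlinarith
      · nlinarith
      · positivity
    have total : HasDerivAt h (fdi x + fdi (-x) * (-1) - fdi (x^2) * (2*x) / 2) x :=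
      (dF.add dFn).sub (dFsq.div_const 2)
    convert total using 1
    unfold fdi
    have hlog : Real.log (1 - x^2) = Real.log (1-x) + Real.log (1+x) := by
      rw [show (1:ℝ) - x^2 = (1-x)*(1+x) by ring]
      exact Real.log_mul (by linarith) (by linarith)
    rw [hlog]
    have hx0' : x ≠ 0 := ne_of_gt hx0
    field_simp
    ring
  have := const_of_deriv_zero hb0 hcont hderiv
  rw [hh] at this
  simpa [Fdi_zero] using this

lemma eq_landen {b : ℝ} (hb0 : 0 < b) (hb : b ≤ 2/5) :
    Fdi b + Fdi (-b/(1-b)) + (Real.log (1-b))^2/2 = 0 := by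
  set h : ℝ → ℝ := fun x => Fdi x + Fdi (-x/(1-x)) + (Real.log (1-x))^2/2 with hh
  have hcont : ContinuousOn h (Icc 0 b) := by
    have hne : ∀ x ∈ Icc (0:ℝ) b, (1:ℝ) - x ≠ 0 := by
      intro x hx; obtain ⟨h1, h2⟩ := hx; intro hc; linarith
    have cw : ContinuousOn (fun x : ℝ => -x/(1-x)) (Icc 0 b) :=
      (continuousOn_neg.mono (subset_univ _)).div
        ((continuousOn_const.sub continuousOn_id)) hne
    have m1 : MapsTo (fun x : ℝ => x) (Icc 0 b) (Icc (-(3/4):ℝ) 1) := by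
      intro x hx; obtain ⟨h1, h2⟩ := hx; simp only [mem_Icc]; constructor <;> linarith
    have m2 : MapsTo (fun x : ℝ => -x/(1-x)) (Icc 0 b) (Icc (-(3/4):ℝ) 1) := by
      intro x hx
      obtain ⟨h1, h2⟩ := hx
      have hx1 : (0:ℝ) < 1 - x := by linarith
      simp only [mem_Icc]
      constructor
      · have hle : x/(1-x) ≤ 3/4 := by
          rw [div_le_iff₀ hx1]; nlinarith
        rw [neg_div]; linarith
      · have : -x / (1-x) ≤ 0 := div_nonpos_of_nonpos_of_nonneg (by linarith) hx1.le
        linarith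
    have clog : ContinuousOn (fun x : ℝ => Real.log (1-x)) (Icc 0 b) := by
      intro x hx
      refine ((Real.continuousAt_log (hne x hx)).comp (by fun_prop)).continuousWithinAt
    exact ((Fdi_contOn.comp continuousOn_id m1).add (Fdi_contOn.comp cw m2)).add
      ((clog.pow 2).div_const 2)
  have hderiv : ∀ x ∈ Ioo 0 b, HasDerivAt h 0 x := by
    intro x hx
    obtain ⟨hx0, hxb⟩ := hx
    have hx1 : (0:ℝ) < 1 - x := by linarith
    have hx1' : (1:ℝ) - x ≠ 0 := ne_of_gt hx1
    have dF : HasDerivAt Fdi (fdi x) x := Fdi_hasDerivAt (by linarith) (by linarith) (ne_of_gt hx0)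
    set w := -x/(1-x) with hw
    have hwneg : w < 0 := div_neg_of_neg_of_pos (by linarith) hx1
    have hwgt : -(3/4) < w := by
      rw [hw, neg_div, neg_lt_neg_iff, div_lt_iff₀ hx1]
      nlinarith
    have dW : HasDerivAt (fun y : ℝ => -y/(1-y)) (-1/(1-x)^2) x := by
      have hc : HasDerivAt (fun y : ℝ => -y) (-1) x := (hasDerivAt_id x).neg
      have hd : HasDerivAt (fun y : ℝ => 1-y) (-1) x := by
        exact (hasDerivAt_id' x).const_sub (1:ℝ)
      have := hc.div hd hx1'
      refine this.congr_deriv ?_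
      field_simp
      ring
    have dFW : HasDerivAt (fun y : ℝ => Fdi (-y/(1-y))) (fdi w * (-1/(1-x)^2)) x := by
      have := (Fdi_hasDerivAt hwgt (by linarith) (ne_of_lt hwneg)).comp x dW; exact this
    have dlog : HasDerivAt (fun y : ℝ => Real.log (1-y)) (-(1-x)⁻¹) x := by
      have hd : HasDerivAt (fun y : ℝ => 1-y) (-1) x := by
        exact (hasDerivAt_id' x).const_sub (1:ℝ)
      have := (Real.hasDerivAt_log hx1').comp x hd
      refine this.congr_deriv ?_
      ring
    have dL : HasDerivAt (fun y : ℝ => (Real.log (1-y))^2/2)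
        (Real.log (1-x) * (-(1-x)⁻¹)) x := by
      have := ((dlog.pow 2).div_const 2)
      refine this.congr_deriv ?_
      ring
    have total : HasDerivAt h (fdi x + fdi w * (-1/(1-x)^2) + Real.log (1-x) * (-(1-x)⁻¹)) x :=
      (dF.add dFW).add dL
    convert total using 1
    have h1mw : 1 - w = (1-x)⁻¹ := by
      rw [hw]; field_simp; ring
    have hfdiw : fdi w = Real.log (1-x) / w := by
      unfold fdi
      rw [h1mw, Real.log_inv, neg_neg]
    rw [hfdiw, hw, show fdi x = -Real.log (1-x)/x from rfl]
    have hx0' : x ≠ 0 := ne_of_gt hx0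
    field_simp
    ring
  have := const_of_deriv_zero hb0 hcont hderiv
  rw [hh] at this
  simp only [neg_zero, zero_div, sub_zero, Real.log_one] at this
  simpa [Fdi_zero] using this

lemma eq_euler : ∀ x ∈ Ioo (0:ℝ) 1,
    Fdi x + Fdi (1-x) + Real.log x * Real.log (1-x) = π^2/6 := by
  set h : ℝ → ℝ := fun x => Fdi x + Fdi (1-x) + Real.log x * Real.log (1-x) with hh
  have pair : ∀ x ∈ Ioo (0:ℝ) 1, ∀ y ∈ Ioo (0:ℝ) 1, x < y → h y = h x := by
    intro x hx y hy hxy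
    refine const_of_deriv_zero hxy ?_ ?_
    · -- continuity on Icc x y
      have m1 : MapsTo (fun t : ℝ => t) (Icc x y) (Icc (-(3/4):ℝ) 1) := by
        intro t ht; obtain ⟨h1, h2⟩ := ht
        simp only [mem_Icc]
        constructor <;> [linarith [hx.1]; linarith [hy.2]]
      have m2 : MapsTo (fun t : ℝ => 1-t) (Icc x y) (Icc (-(3/4):ℝ) 1) := by
        intro t ht; obtain ⟨h1, h2⟩ := ht
        simp only [mem_Icc]
        constructor <;> [linarith [hy.2]; linarith [hx.1]]
      have clogx : ContinuousOn (fun t : ℝ => Real.log t) (Icc x y) := by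
        intro t ht
        exact (Real.continuousAt_log (by have := ht.1; have := hx.1; intro hc; simp [hc] at *; linarith)).continuousWithinAt
      have clog1x : ContinuousOn (fun t : ℝ => Real.log (1-t)) (Icc x y) := by
        intro t ht
        have ht2 : t < 1 := lt_of_le_of_lt ht.2 hy.2
        exact ((Real.continuousAt_log (by intro hc; linarith [hc])).comp
          (by fun_prop : ContinuousAt (fun t : ℝ => 1 - t) t)).continuousWithinAt
      exact ((Fdi_contOn.comp continuousOn_id m1).add
        (Fdi_contOn.comp (continuousOn_const.sub continuousOn_id) m2)).add (clogx.mul clog1x)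
    · intro t ht
      obtain ⟨ht1, ht2⟩ := ht
      have ht0 : 0 < t := lt_trans hx.1 ht1
      have ht1' : t < 1 := lt_trans ht2 hy.2
      have dF : HasDerivAt Fdi (fdi t) t := Fdi_hasDerivAt (by linarith) ht1' (ne_of_gt ht0)
      have hdsub : HasDerivAt (fun s : ℝ => 1-s) (-1) t := by
        exact (hasDerivAt_id' t).const_sub (1:ℝ)
      have dF1 : HasDerivAt (fun s : ℝ => Fdi (1-s)) (fdi (1-t) * (-1)) t :=
        (Fdi_hasDerivAt (by linarith) (by linarith) (by intro hc; linarith [hc])).comp t hdsub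
      have dlog1 : HasDerivAt (fun s : ℝ => Real.log (1-s)) (-(1-t)⁻¹) t := by
        have := (Real.hasDerivAt_log (by intro hc; linarith [hc] : (1:ℝ)-t ≠ 0)).comp t hdsub
        refine this.congr_deriv ?_
        ring
      have dmul : HasDerivAt (fun s : ℝ => Real.log s * Real.log (1-s))
          (t⁻¹ * Real.log (1-t) + Real.log t * (-(1-t)⁻¹)) t :=
        (Real.hasDerivAt_log (ne_of_gt ht0)).mul dlog1
      have total : HasDerivAt h (fdi t + fdi (1-t) * (-1) +
          (t⁻¹ * Real.log (1-t) + Real.log t * (-(1-t)⁻¹))) t := (dF.add dF1).add dmul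
      convert total using 1
      rw [show fdi t = -Real.log (1-t)/t from rfl,
        show fdi (1-t) = -Real.log (1-(1-t))/(1-t) from rfl]
      have h1 : (1:ℝ) - (1-t) = t := by ring
      rw [h1]
      have ht0' : t ≠ 0 := ne_of_gt ht0
      have ht1'' : (1:ℝ) - t ≠ 0 := by intro hc; linarith [hc]
      field_simp
      ring
  -- limit at 0+
  have t1 : Tendsto Fdi (nhdsWithin 0 (Ioi 0)) (nhds 0) := by
    have := (Fdi_contOn 0 (by norm_num)).mono (Ioo_subset_Icc_self.trans
      (Icc_subset_Icc (by norm_num) le_rfl) : Ioo (0:ℝ) 1 ⊆ Icc (-(3/4):ℝ) 1)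
    rw [ContinuousWithinAt, Fdi_zero] at this
    rwa [← nhdsWithin_Ioo_eq_nhdsGT zero_lt_one]
  have t2 : Tendsto (fun x : ℝ => Fdi (1-x)) (nhdsWithin 0 (Ioi 0)) (nhds (Fdi 1)) := by
    have hcw : Tendsto Fdi (nhdsWithin 1 (Iio 1)) (nhds (Fdi 1)) := by
      have := (Fdi_contOn 1 (by norm_num)).mono (Ioo_subset_Icc_self.trans
        (Icc_subset_Icc (by norm_num) le_rfl) : Ioo (0:ℝ) 1 ⊆ Icc (-(3/4):ℝ) 1)
      rw [ContinuousWithinAt] at this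
      rwa [← nhdsWithin_Ioo_eq_nhdsLT zero_lt_one]
    refine hcw.comp ?_
    refine tendsto_nhdsWithin_of_tendsto_nhds_of_eventually_within _ ?_ ?_
    · have hco : Continuous (fun x : ℝ => 1-x) := continuous_const.sub continuous_id
      have : Tendsto (fun x : ℝ => 1-x) (nhds 0) (nhds 1) := by
        simpa using hco.tendsto (0:ℝ)
      exact this.mono_left nhdsWithin_le_nhds
    · filter_upwards [self_mem_nhdsWithin] with x hx
      simp only [mem_Iio]
      linarith [mem_Ioi.1 hx]
  have t3 : Tendsto (fun x : ℝ => Real.log x * Real.log (1-x)) (nhdsWithin 0 (Ioi 0)) (nhds 0) := by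
    have ta : Tendsto (fun x : ℝ => x * Real.log x) (nhdsWithin 0 (Ioi 0)) (nhds 0) := by
      have := continuous_mul_log.tendsto (0:ℝ)
      simp only [Real.log_zero, mul_zero] at this
      exact this.mono_left nhdsWithin_le_nhds
    have tb : Tendsto fdi (nhdsWithin 0 (Ioi 0)) (nhds 1) :=
      fdi_slope.mono_left (nhdsWithin_mono 0 (fun x hx => ne_of_gt (mem_Ioi.1 hx)))
    have := (ta.mul tb).neg
    simp only [zero_mul, neg_zero] at this
    refine this.congr' ?_
    filter_upwards [self_mem_nhdsWithin] with x hx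
    have hx0 : x ≠ 0 := ne_of_gt (mem_Ioi.1 hx)
    rw [show fdi x = -Real.log (1-x)/x from rfl]
    field_simp
  have hlim : Tendsto h (nhdsWithin 0 (Ioi 0)) (nhds (Fdi 1)) := by
    have := (t1.add t2).add t3
    simpa using this
  intro x hx
  have heventually : ∀ᶠ y in nhdsWithin 0 (Ioi 0), h y = h x := by
    filter_upwards [Ioo_mem_nhdsGT_of_mem (by constructor <;> norm_num : (0:ℝ) ∈ Ico (0:ℝ) 1)] with y hy
    rcases lt_trichotomy y x with hlt | heq | hgt
    · exact (pair y hy x hx hlt).symm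
    · rw [heq]
    · exact pair x hx y hy hgt
  have hconst : Tendsto h (nhdsWithin 0 (Ioi 0)) (nhds (h x)) :=
    Tendsto.congr' (by filter_upwards [heventually] with y hy using hy.symm) tendsto_const_nhds
  have : h x = Fdi 1 := tendsto_nhds_unique hconst hlim
  rw [hh] at this
  simpa [Fdi_one] using this

-- golden ratio facts
lemma sqrt5_sq : Real.sqrt 5 ^ 2 = 5 := Real.sq_sqrt (by norm_num)
lemma sqrt5_gt : 2 < Real.sqrt 5 := by nlinarith [sqrt5_sq, Real.sqrt_nonneg 5]
lemma sqrt5_lt : Real.sqrt 5 < 12/5 := by nlinarith [sqrt5_sq, Real.sqrt_nonneg 5]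

lemma Fdi_neg_g :
    Fdi (-((Real.sqrt 5 - 1)/2)) = (Real.log ((Real.sqrt 5 - 1)/2))^2/2 - π^2/15 := by
  set g : ℝ := (Real.sqrt 5 - 1)/2 with hg
  have hg0 : 0 < g := by rw [hg]; nlinarith [sqrt5_gt]
  have hglt : g < 7/10 := by rw [hg]; nlinarith [sqrt5_lt]
  have hgsq : g^2 = 1 - g := by rw [hg]; nlinarith [sqrt5_sq]
  have hgsqlt : g^2 ≤ 2/5 := by nlinarith
  have hgsqpos : 0 < g^2 := by positivity
  set lam : ℝ := Real.log g with hlam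
  -- duplication at b = g
  have e1 : Fdi g + Fdi (-g) - Fdi (g^2)/2 = 0 := eq_dup hg0 hglt.le
  -- landen at b = g^2 : -g^2/(1-g^2) = -g
  have hws : -(g^2)/(1-g^2) = -g := by
    rw [hgsq]
    have h1 : (1:ℝ) - (1 - g) = g := by ring
    rw [h1]
    field_simp [ne_of_gt hg0]
    nlinarith
  have hlog1msq : Real.log (1 - g^2) = lam := by
    rw [hgsq, show (1:ℝ) - (1-g) = g by ring, hlam]
  have e2' := eq_landen hgsqpos hgsqlt
  rw [hws, hlog1msq] at e2'
  -- euler at x = g^2 : 1 - g^2 = g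
  have e3' := eq_euler (g^2) ⟨hgsqpos, by nlinarith⟩
  rw [show (1:ℝ) - g^2 = g from by rw [hgsq]; ring] at e3'
  have hloggsq : Real.log (g^2) = 2*lam := by
    rw [sq, Real.log_mul (ne_of_gt hg0) (ne_of_gt hg0), hlam]
    ring
  rw [hloggsq, ← hlam] at e3'
  ring_nf at e1 e2' e3' ⊢
  -- linear algebra
  linarith [e1, e2', e3']

noncomputable def ugr (x : ℝ) : ℝ := (1 + Real.sqrt (1 + 4*x))/2
noncomputable def Jgr (x : ℝ) : ℝ := (Real.log (ugr x))^2/2 - Fdi (1 - ugr x)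

lemma ugr_zero : ugr 0 = 1 := by
  unfold ugr
  norm_num

lemma ugr_sq {x : ℝ} (hx : 0 ≤ x) : Real.sqrt (1+4*x) ^ 2 = 1 + 4*x :=
  Real.sq_sqrt (by linarith)

lemma ugr_one_le {x : ℝ} (hx : 0 ≤ x) : 1 ≤ ugr x := by
  unfold ugr
  nlinarith [ugr_sq hx, Real.sqrt_nonneg (1+4*x)]

lemma ugr_lt {x : ℝ} (hx : 0 ≤ x) (hx1 : x ≤ 1) : ugr x ≤ (1 + Real.sqrt 5)/2 := by
  unfold ugr
  have h5 : Real.sqrt (1+4*x) ≤ Real.sqrt 5 := Real.sqrt_le_sqrt (by linarith)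
  linarith

lemma ugr_cont : Continuous ugr := by
  unfold ugr
  fun_prop

lemma ugr_hasDerivAt {x : ℝ} (hx : 0 ≤ x) :
    HasDerivAt ugr (1/Real.sqrt (1+4*x)) x := by
  have h1 : (0:ℝ) < 1 + 4*x := by linarith
  have hin : HasDerivAt (fun y : ℝ => 1 + 4*y) 4 x := by
    simpa using ((hasDerivAt_id' x).const_mul (4:ℝ)).const_add (1:ℝ)
  have hs := (Real.hasDerivAt_sqrt (ne_of_gt h1)).comp x hin
  have := (hs.const_add 1).div_const 2
  refine this.congr_deriv ?_
  unfold ugr at *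
  field_simp
  ring

lemma Jgr_deriv {x : ℝ} (hx : 0 < x) (hx1 : x < 1) :
    HasDerivAt Jgr (Real.log ((1 + Real.sqrt (1 + 4 * x)) / 2) / x) x := by
  set s := Real.sqrt (1+4*x) with hs
  have hs2 : s^2 = 1 + 4*x := ugr_sq hx.le
  have hs1 : 1 < s := by nlinarith [Real.sqrt_nonneg (1+4*x)]
  have hs5 : s < Real.sqrt 5 := by
    nlinarith [Real.sq_sqrt (by norm_num : (5:ℝ) ≥ 0), Real.sqrt_nonneg 5]
  have hsqrt5 : Real.sqrt 5 < 12/5 := sqrt5_lt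
  have hu1 : 1 < ugr x := by unfold ugr; rw [← hs]; linarith
  have hult : ugr x < 17/10 := by unfold ugr; rw [← hs]; linarith
  have hu0 : ugr x ≠ 0 := by linarith
  have du : HasDerivAt ugr (1/s) x := ugr_hasDerivAt hx.le
  have dlogu : HasDerivAt (fun y => Real.log (ugr y)) ((ugr x)⁻¹ * (1/s)) x :=
    (Real.hasDerivAt_log hu0).comp x du
  have dsq : HasDerivAt (fun y => (Real.log (ugr y))^2/2)
      (Real.log (ugr x) * ((ugr x)⁻¹ * (1/s))) x := by
    have := (dlogu.pow 2).div_const 2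
    refine this.congr_deriv ?_
    ring
  have dinner : HasDerivAt (fun y => 1 - ugr y) (-(1/s)) x := by
    exact du.const_sub (1:ℝ)
  have dFcomp : HasDerivAt (fun y => Fdi (1 - ugr y)) (fdi (1 - ugr x) * (-(1/s))) x := by
    refine (Fdi_hasDerivAt ?_ ?_ ?_).comp x dinner
    · linarith
    · linarith
    · intro hc
      have : ugr x = 1 := by linarith
      linarith
  have total : HasDerivAt Jgr
      (Real.log (ugr x) * ((ugr x)⁻¹ * (1/s)) - fdi (1 - ugr x) * (-(1/s))) x :=
    dsq.sub dFcomp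
  have hgoal_eq : Real.log ((1 + Real.sqrt (1 + 4 * x)) / 2) / x
      = Real.log (ugr x) * ((ugr x)⁻¹ * (1/s)) - fdi (1 - ugr x) * (-(1/s)) := by
    have hfd : fdi (1 - ugr x) = Real.log (ugr x) / (ugr x - 1) := by
      rw [show fdi (1 - ugr x) = -Real.log (1 - (1 - ugr x))/(1 - ugr x) from rfl]
      rw [show (1:ℝ) - (1 - ugr x) = ugr x by ring]
      rw [neg_div, ← div_neg, neg_sub]
    rw [hfd]
    have huu : ugr x * (ugr x - 1) = x := by
      unfold ugr
      rw [← hs]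
      nlinarith
    have h2u : 2 * ugr x - 1 = s := by
      unfold ugr
      rw [← hs]
      ring
    have hx0 : x ≠ 0 := ne_of_gt hx
    have hs0 : s ≠ 0 := by linarith
    have hu1' : ugr x - 1 ≠ 0 := by intro hc; linarith
    have hkey : ((ugr x)⁻¹ + (ugr x - 1)⁻¹) * (1/s) = 1/x := by
      rw [inv_add_inv hu0 hu1']
      rw [show ugr x + (ugr x - 1) = 2 * ugr x - 1 by ring, h2u, huu]
      field_simp
    rw [show Real.log ((1 + Real.sqrt (1 + 4 * x)) / 2) = Real.log (ugr x) from rfl]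
    calc Real.log (ugr x) / x = Real.log (ugr x) * (1/x) := by ring
    _ = Real.log (ugr x) * (((ugr x)⁻¹ + (ugr x - 1)⁻¹) * (1/s)) := by rw [hkey]
    _ = Real.log (ugr x) * ((ugr x)⁻¹ * (1 / s)) - Real.log (ugr x) / (ugr x - 1) * -(1 / s) := by
      rw [div_eq_mul_inv]
      ring
  rw [hgoal_eq]
  exact total

lemma Jgr_contOn : ContinuousOn Jgr (Icc (0:ℝ) 1) := by
  have hlog : ContinuousOn (fun x => (Real.log (ugr x))^2/2) (Icc (0:ℝ) 1) := by
    intro x hx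
    have h1 : (1:ℝ) ≤ ugr x := ugr_one_le hx.1
    exact (((Real.continuousAt_log (by linarith)).comp
      (ugr_cont.continuousAt)).pow 2).continuousWithinAt.div_const 2
  have hF : ContinuousOn (fun x => Fdi (1 - ugr x)) (Icc (0:ℝ) 1) := by
    refine Fdi_contOn.comp (continuousOn_const.sub ugr_cont.continuousOn) ?_
    intro x hx
    have h1 : (1:ℝ) ≤ ugr x := ugr_one_le hx.1
    have h2 : ugr x ≤ (1 + Real.sqrt 5)/2 := ugr_lt hx.1 hx.2
    have h3 : Real.sqrt 5 < 12/5 := sqrt5_lt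
    simp only [mem_Icc]
    constructor <;> linarith
  exact hlog.sub hF

noncomputable def IgrE (x : ℝ) : ℝ :=
  if x = 0 then 1 else Real.log ((1 + Real.sqrt (1 + 4 * x)) / 2) / x

lemma Igr_slope : Tendsto (fun x => Real.log ((1 + Real.sqrt (1 + 4 * x)) / 2) / x)
    (nhdsWithin 0 {(0:ℝ)}ᶜ) (nhds 1) := by
  have hd : HasDerivAt (fun x => Real.log (ugr x)) 1 0 := by
    have := (Real.hasDerivAt_log (by rw [ugr_zero]; norm_num)).comp 0 (ugr_hasDerivAt le_rfl)
    simp only [ugr_zero, Real.sqrt_one, inv_one] at this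
    norm_num at this
    exact this
  have := hasDerivAt_iff_tendsto_slope.1 hd
  refine this.congr' ?_
  filter_upwards [self_mem_nhdsWithin] with t ht
  have ht' : t ≠ 0 := ht
  simp only [slope_def_field, ugr_zero, Real.log_one]
  rw [show ugr t = (1 + Real.sqrt (1 + 4*t))/2 from rfl]
  rw [sub_zero, sub_zero]

lemma IgrE_eq_ae : (fun x => Real.log ((1 + Real.sqrt (1 + 4 * x)) / 2) / x) =ᵐ[volume] IgrE := by
  have h : {t : ℝ | ¬ Real.log ((1 + Real.sqrt (1 + 4 * t)) / 2) / t = IgrE t} ⊆ {0} := by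
    intro t ht
    simp only [mem_setOf_eq, IgrE] at ht
    rcases eq_or_ne t 0 with rfl | h0
    · exact mem_singleton _
    · simp [h0] at ht
  exact ae_iff.2 (measure_mono_null h (measure_singleton 0))

lemma Igr_intervalIntegrable :
    IntervalIntegrable (fun x => Real.log ((1 + Real.sqrt (1 + 4 * x)) / 2) / x) volume 0 1 := by
  have hE : ContinuousOn IgrE (Icc (0:ℝ) 1) := by
    intro x hx
    rcases eq_or_ne x 0 with rfl | hx0
    · apply ContinuousAt.continuousWithinAt
      rw [ContinuousAt]
      have h0 : IgrE 0 = 1 := by simp [IgrE]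
      rw [h0, ← nhdsNE_sup_pure (0:ℝ), tendsto_sup]
      constructor
      · refine Igr_slope.congr' ?_
        filter_upwards [self_mem_nhdsWithin] with t ht
        have ht' : t ≠ 0 := ht
        simp [IgrE, ht']
      · simpa [h0] using (tendsto_pure_nhds IgrE 0)
    · apply ContinuousAt.continuousWithinAt
      have hxpos : 0 < x := lt_of_le_of_ne hx.1 (Ne.symm hx0)
      have hcont : ContinuousAt (fun x => Real.log ((1 + Real.sqrt (1 + 4 * x)) / 2) / x) x := by
        have h1 : (1:ℝ) ≤ ugr x := ugr_one_le hx.1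
        refine ContinuousAt.div ?_ continuousAt_id hx0
        exact (Real.continuousAt_log (by rw [show (1 + Real.sqrt (1+4*x))/2 = ugr x from rfl]; linarith)).comp
          (by fun_prop)
      refine hcont.congr ?_
      filter_upwards [isOpen_ne.mem_nhds hx0] with t ht
      simp [IgrE, ht]
  have hint : IntegrableOn IgrE (Icc (0:ℝ) 1) volume :=
    hE.integrableOn_compact isCompact_Icc
  rw [intervalIntegrable_iff_integrableOn_Icc_of_le zero_le_one]
  exact hint.congr_fun_ae (ae_restrict_of_ae IgrE_eq_ae.symm)

lemma final_integral :
    ∫ x in (0:ℝ)..1, Real.log ((1 + Real.sqrt (1 + 4 * x)) / 2) / x = π ^ 2 / 15 := by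
  have hFTC := intervalIntegral.integral_eq_sub_of_hasDeriv_right_of_le zero_le_one
    Jgr_contOn (fun x hx => (Jgr_deriv hx.1 hx.2).hasDerivWithinAt) Igr_intervalIntegrable
  rw [hFTC]
  have hJ0 : Jgr 0 = 0 := by
    unfold Jgr
    rw [ugr_zero]
    simp [Fdi_zero]
  have hJ1 : Jgr 1 = π^2/15 := by
    unfold Jgr
    have hu1 : ugr 1 = (1 + Real.sqrt 5)/2 := by
      unfold ugr
      norm_num
    rw [hu1]
    have h1m : 1 - (1 + Real.sqrt 5)/2 = -((Real.sqrt 5 - 1)/2) := by ring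
    rw [h1m, Fdi_neg_g]
    have hlog : Real.log ((Real.sqrt 5 - 1)/2) = -Real.log ((1 + Real.sqrt 5)/2) := by
      rw [← Real.log_inv]
      congr 1
      rw [inv_eq_one_div, eq_div_iff (by nlinarith [sqrt5_gt] : (1 + Real.sqrt 5)/2 ≠ 0)]
      nlinarith [sqrt5_sq]
    rw [hlog]
    ring
  rw [hJ0, hJ1]
  ring

theorem n_two_integral :
    (∀ x : ℝ, 0 < x → x ≤ 1 →
      (Matrix.charpoly (!![0, 1; x, 1]) ).IsRoot ((1 + Real.sqrt (1 + 4 * x)) / 2) ∧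
        ∀ μ : ℝ, (Matrix.charpoly (!![0, 1; x, 1])).IsRoot μ →
          |μ| ≤ (1 + Real.sqrt (1 + 4 * x)) / 2) ∧
      ∫ x in (0:ℝ)..1, Real.log ((1 + Real.sqrt (1 + 4 * x)) / 2) / x = π ^ 2 / 15 := by
  constructor
  · intro x hx hx1
    have hcp : Matrix.charpoly !![(0:ℝ),1;x,1] = Polynomial.X^2 - Polynomial.X - Polynomial.C x := by
      rw [Matrix.charpoly, Matrix.det_fin_two]
      simp [Matrix.charmatrix_apply_eq, Matrix.charmatrix_apply_ne]
      ring
    have hs : Real.sqrt (1 + 4*x) ^ 2 = 1 + 4*x := Real.sq_sqrt (by linarith)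
    have hs1 : 1 ≤ Real.sqrt (1 + 4*x) := by
      nlinarith [Real.sqrt_nonneg (1+4*x), hs]
    constructor
    · simp only [hcp, Polynomial.IsRoot, Polynomial.eval_sub, Polynomial.eval_pow,
        Polynomial.eval_X, Polynomial.eval_C]
      nlinarith [hs]
    · intro μ hμ
      simp only [hcp, Polynomial.IsRoot, Polynomial.eval_sub, Polynomial.eval_pow,
        Polynomial.eval_X, Polynomial.eval_C] at hμ
      rw [abs_le]
      constructor <;> nlinarith [hs, Real.sqrt_nonneg (1+4*x)]
  · exact final_integral
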